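/- Let d ≥ 1, s > 0 and β > 0, and let φ_s(x) := (2πs²)^{−d/2} exp(−‖x‖²/(2s²)) be the centered Gaussian density on ℝ^d with covariance s²I. Let f_T : ℝ^d → [0, ∞) be a measurable probability density with c := ∫ f_T(x)^{β/(1+β)} dx ∈ (0, ∞), and define f₀(y) := c⁻¹ ∫ φ_s(x − y) f_T(x)^{β/(1+β)} dx. Then f₀ is a probability density on ℝ^d, and the functions ρ₀ ≡ c^{−(1+β)} and ρ_T(x) := c^{β} f_T(x)^{β/(1+β)} solve the soft-constrained Schrödinger system with kernel p(x, y) = φ_s(x − y): namely c^{1+β} f₀(y) = ∫ φ_s(x − y) ρ_T(x) dx for every y, and f_T(x) = ρ_T(x)^{(1+β)/β} ∫ φ_s(x − y) c^{−(1+β)} dy for a.e. x. -/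

import Mathlib

open MeasureTheory

/-- The centered Gaussian density on `ℝ^d` with covariance `s² I`. -/
noncomputable def gaussDensity (d : ℕ) (s : ℝ) (x : EuclideanSpace ℝ (Fin d)) : ℝ :=
  (2 * Real.pi * s ^ 2) ^ (-(d : ℝ) / 2) * Real.exp (-‖x‖ ^ 2 / (2 * s ^ 2))

open scoped ENNReal NNReal
open Real

lemma gauss_nonneg (d : ℕ) (s : ℝ) (x : EuclideanSpace ℝ (Fin d)) :
    0 ≤ gaussDensity d s x := by
  unfold gaussDensity; positivity

lemma gauss_eq (d : ℕ) {s : ℝ} (hs : 0 < s) (x : EuclideanSpace ℝ (Fin d)) :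
    gaussDensity d s x = (2 * Real.pi * s ^ 2) ^ (-(d : ℝ) / 2)
      * Real.exp (-(2 * s ^ 2)⁻¹ * ‖x‖ ^ 2) := by
  unfold gaussDensity
  congr 1
  rw [neg_div, div_eq_inv_mul, neg_mul]

lemma exp_integrable (d : ℕ) {b : ℝ} (hb : 0 < b) :
    Integrable (fun v : EuclideanSpace ℝ (Fin d) => Real.exp (-b * ‖v‖ ^ 2)) volume := by
  have h := (GaussianFourier.integrable_cexp_neg_mul_sq_norm_add
    (b := (b : ℂ)) (by simpa using hb) 0 (0 : EuclideanSpace ℝ (Fin d))).norm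
  refine h.congr (Filter.Eventually.of_forall fun v => ?_)
  simp [Complex.norm_exp]
  norm_cast
  left; rfl

lemma gauss_cont (d : ℕ) (s : ℝ) : Continuous (gaussDensity d s) := by
  unfold gaussDensity
  fun_prop

lemma gauss_integrable (d : ℕ) {s : ℝ} (hs : 0 < s) :
    Integrable (gaussDensity d s) volume := by
  have : Integrable (fun v : EuclideanSpace ℝ (Fin d) =>
      Real.exp (-(2 * s ^ 2)⁻¹ * ‖v‖ ^ 2)) volume := exp_integrable d (by positivity)
  exact (this.const_mul _).congr (Filter.Eventually.of_forall fun v => (gauss_eq d hs v).symm)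

lemma gauss_integral_one (d : ℕ) {s : ℝ} (hs : 0 < s) :
    ∫ x : EuclideanSpace ℝ (Fin d), gaussDensity d s x = 1 := by
  have hb : (0:ℝ) < (2 * s ^ 2)⁻¹ := by positivity
  have key := GaussianFourier.integral_rexp_neg_mul_sq_norm
    (V := EuclideanSpace ℝ (Fin d)) hb
  simp_rw [gauss_eq d hs]
  rw [MeasureTheory.integral_const_mul, key]
  rw [show Real.pi / (2 * s ^ 2)⁻¹ = 2 * Real.pi * s ^ 2 by field_simp,
    finrank_euclideanSpace_fin]
  rw [← Real.rpow_add (by positivity)]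
  rw [show -(d:ℝ)/2 + (d:ℝ)/2 = 0 by ring, Real.rpow_zero]

/-- Explicit solution of the soft-constrained Schrödinger system with Gaussian kernel:
`f₀ = c⁻¹ (φ_s ⋆ f_T^{β/(1+β)})` is a probability density, and `ρ₀ ≡ c^{−(1+β)}`,
`ρ_T = c^β f_T^{β/(1+β)}` solve the system. -/
theorem stmt12 {d : ℕ} (hd : 1 ≤ d) (s β : ℝ) (hs : 0 < s) (hβ : 0 < β)
    (fT : EuclideanSpace ℝ (Fin d) → ℝ) (hfTm : Measurable fT) (hfT0 : ∀ x, 0 ≤ fT x)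
    (hfT1 : ∫ x, fT x ∂volume = 1)
    (c : ℝ) (hc : c = ∫ x, fT x ^ (β / (1 + β)) ∂volume) (hcpos : 0 < c)
    (hcint : Integrable (fun x => fT x ^ (β / (1 + β))) volume) :
    (∀ y, 0 ≤ c⁻¹ * ∫ x, gaussDensity d s (x - y) * fT x ^ (β / (1 + β)) ∂volume) ∧
    (∫ y, c⁻¹ * ∫ x, gaussDensity d s (x - y) * fT x ^ (β / (1 + β)) ∂volume ∂volume = 1) ∧
    (∀ y, c ^ (1 + β) * (c⁻¹ * ∫ x, gaussDensity d s (x - y) * fT x ^ (β / (1 + β)) ∂volume)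
        = ∫ x, gaussDensity d s (x - y) * (c ^ β * fT x ^ (β / (1 + β))) ∂volume) ∧
    (∀ᵐ x ∂volume,
      fT x = (c ^ β * fT x ^ (β / (1 + β))) ^ ((1 + β) / β)
        * ∫ y, gaussDensity d s (x - y) * c ^ (-(1 + β)) ∂volume) := by
  set g : EuclideanSpace ℝ (Fin d) → ℝ := fun x => fT x ^ (β / (1 + β)) with hg
  have hg0 : ∀ x, 0 ≤ g x := fun x => Real.rpow_nonneg (hfT0 x) _
  have hgm : Measurable g := hfTm.pow_const _
  have hφ0 := gauss_nonneg d s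
  have hφint := gauss_integrable d hs
  have hφ1 := gauss_integral_one d hs
  have hφm := (gauss_cont d s).measurable
  have hφtrans : ∀ x : EuclideanSpace ℝ (Fin d),
      ∫ y, gaussDensity d s (x - y) ∂volume = 1 := fun x => by
    rw [integral_sub_left_eq_self (gaussDensity d s) volume x, hφ1]
  have hφtrans_int : ∀ x : EuclideanSpace ℝ (Fin d),
      Integrable (fun y => gaussDensity d s (x - y)) volume :=
    fun x => hφint.comp_sub_left x
  have hφlint : ∀ x : EuclideanSpace ℝ (Fin d),
      ∫⁻ y, ENNReal.ofReal (gaussDensity d s (x - y)) ∂volume = 1 := by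
    intro x
    rw [← ofReal_integral_eq_lintegral_ofReal (hφtrans_int x)
      (Filter.Eventually.of_forall fun y => hφ0 _), hφtrans x, ENNReal.ofReal_one]
  have hFem : Measurable (fun p : EuclideanSpace ℝ (Fin d) × EuclideanSpace ℝ (Fin d) =>
      ENNReal.ofReal (gaussDensity d s (p.2 - p.1)) * ENNReal.ofReal (g p.2)) :=
    (ENNReal.measurable_ofReal.comp (hφm.comp (measurable_snd.sub measurable_fst))).mul
      (ENNReal.measurable_ofReal.comp (hgm.comp measurable_snd))
  have hFint : Integrable (Function.uncurry
      (fun y x : EuclideanSpace ℝ (Fin d) => gaussDensity d s (x - y) * g x))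
      (volume.prod volume) := by
    refine ⟨((hφm.comp (measurable_snd.sub measurable_fst)).mul
      (hgm.comp measurable_snd)).aestronglyMeasurable, ?_⟩
    rw [hasFiniteIntegral_def]
    calc ∫⁻ p : EuclideanSpace ℝ (Fin d) × EuclideanSpace ℝ (Fin d), ↑‖Function.uncurry
          (fun y x : EuclideanSpace ℝ (Fin d) => gaussDensity d s (x - y) * g x) p‖₊
          ∂(volume.prod volume)
        = ∫⁻ p : EuclideanSpace ℝ (Fin d) × EuclideanSpace ℝ (Fin d),
            ENNReal.ofReal (gaussDensity d s (p.2 - p.1)) * ENNReal.ofReal (g p.2)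
            ∂(volume.prod volume) := by
          refine lintegral_congr fun p => ?_
          rw [← ENNReal.ofReal_mul (hφ0 _)]
          exact (Real.enorm_eq_ofReal (mul_nonneg (hφ0 _) (hg0 _)))
      _ = ∫⁻ y, ∫⁻ x, ENNReal.ofReal (gaussDensity d s (x - y))
            * ENNReal.ofReal (g x) ∂volume ∂volume := lintegral_prod _ hFem.aemeasurable
      _ = ∫⁻ x, ∫⁻ y, ENNReal.ofReal (gaussDensity d s (x - y))
            * ENNReal.ofReal (g x) ∂volume ∂volume :=
          lintegral_lintegral_swap hFem.aemeasurable
      _ = ∫⁻ x, ENNReal.ofReal (g x) ∂volume := by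
          refine lintegral_congr fun x => ?_
          have hm : Measurable fun y => ENNReal.ofReal (gaussDensity d s (x - y)) :=
            ENNReal.measurable_ofReal.comp (hφm.comp (measurable_const.sub measurable_id))
          rw [lintegral_mul_const _ hm, hφlint x, one_mul]
      _ = ENNReal.ofReal c := by
          rw [← ofReal_integral_eq_lintegral_ofReal hcint
            (Filter.Eventually.of_forall fun x => hg0 x), hc]
      _ < ⊤ := ENNReal.ofReal_lt_top
  have hdouble : ∫ y, ∫ x, gaussDensity d s (x - y) * g x ∂volume ∂volume = c := by
    rw [MeasureTheory.integral_integral_swap hFint]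
    calc ∫ x, ∫ y, gaussDensity d s (x - y) * g x ∂volume ∂volume
        = ∫ x, g x ∂volume := by
          simp_rw [MeasureTheory.integral_mul_const]
          refine integral_congr_ae (Filter.Eventually.of_forall fun x => ?_)
          simp only []
          rw [hφtrans x, one_mul]
      _ = c := hc.symm
  refine ⟨?_, ?_, ?_, ?_⟩
  · intro y
    exact mul_nonneg (inv_nonneg.mpr hcpos.le)
      (integral_nonneg fun x => mul_nonneg (hφ0 _) (hg0 _))
  · rw [MeasureTheory.integral_const_mul, hdouble, inv_mul_cancel₀ hcpos.ne']
  · intro y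
    have hring : ∀ x, gaussDensity d s (x - y) * (c ^ β * g x)
        = c ^ β * (gaussDensity d s (x - y) * g x) := fun x => by ring
    simp_rw [hg] at hring
    simp_rw [hring]
    rw [MeasureTheory.integral_const_mul, ← mul_assoc]
    congr 1
    rw [← Real.rpow_neg_one c, ← Real.rpow_add hcpos]
    norm_num
  · refine Filter.Eventually.of_forall fun x => ?_
    have h1β : (0:ℝ) < 1 + β := by linarith
    rw [MeasureTheory.integral_mul_const, hφtrans x, one_mul]
    rw [Real.mul_rpow (Real.rpow_nonneg hcpos.le _) (Real.rpow_nonneg (hfT0 x) _)]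
    rw [← Real.rpow_mul hcpos.le, ← Real.rpow_mul (hfT0 x)]
    rw [show β * ((1 + β) / β) = 1 + β by field_simp]
    rw [show β / (1 + β) * ((1 + β) / β) = 1 by field_simp]
    rw [Real.rpow_one]
    rw [mul_assoc, mul_comm (fT x), ← mul_assoc, ← Real.rpow_add hcpos,
      show (1:ℝ) + β + -(1 + β) = 0 by ring, Real.rpow_zero, one_mul]
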